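/- Let Σ be a smooth rank-k horizontal distribution on an open set U ⊆ ℝ^m and let f : U → ℝ be smooth. Then f is n-convex if and only if its horizontal Hessian is positive semidefinite, i.e., if and only if for every p ∈ U and every v ∈ Σ_p one has ⟨D(P∇f)(p)[v], v⟩ ≥ 0, where ∇f is the Euclidean gradient of f, P∇f is the vector field p ↦ P_p(∇f(p)), and D(P∇f)(p)[v] is its directional derivative at p in the direction v. -/

import Mathlib

open Set MeasureTheory
open scoped RealInnerProductSpace ENNReal

/-- A smooth rank-`k` horizontal distribution `Σ` on an open set `U ⊆ ℝ^m`, described by the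
field of orthogonal projections `P p` of `ℝ^m` onto the subspace `Σ_p`. -/
structure HorDistrib (m k : ℕ) where
  U : Set (EuclideanSpace ℝ (Fin m))
  isOpen_U : IsOpen U
  one_le_k : 1 ≤ k
  k_lt_m : k < m
  P : EuclideanSpace ℝ (Fin m) → EuclideanSpace ℝ (Fin m) →L[ℝ] EuclideanSpace ℝ (Fin m)
  smooth_P : ContDiffOn ℝ (⊤ : ℕ∞) P U
  idem : ∀ p ∈ U, ∀ v, P p (P p v) = P p v
  selfAdjoint : ∀ p ∈ U, ∀ v w, ⟪P p v, w⟫ = ⟪v, P p w⟫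
  rank : ∀ p ∈ U, Module.finrank ℝ (LinearMap.range (P p : EuclideanSpace ℝ (Fin m) →ₗ[ℝ] EuclideanSpace ℝ (Fin m))) = k

variable {m k : ℕ}

/-- The plane `Σ_p` of the distribution at `p`, as a subset of `ℝ^m`. -/
def HorDistrib.sigmaAt (D : HorDistrib m k) (p : EuclideanSpace ℝ (Fin m)) :
    Set (EuclideanSpace ℝ (Fin m)) := {v | D.P p v = v}

/-- `γ` is a (smooth) nonholonomic geodesic on the open set `I ⊆ ℝ`:  it is horizontal
(`γ' s ∈ Σ_{γ s}`) and `P_{γ s} (γ'' s) = 0`. -/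
def IsNhGeodesicOn (D : HorDistrib m k) (γ : ℝ → EuclideanSpace ℝ (Fin m)) (I : Set ℝ) : Prop :=
  IsOpen I ∧ (∀ s ∈ I, γ s ∈ D.U) ∧ ContDiffOn ℝ (⊤ : ℕ∞) γ I ∧
  (∀ s ∈ I, D.P (γ s) (deriv γ s) = deriv γ s) ∧
  (∀ s ∈ I, D.P (γ s) (deriv (deriv γ) s) = 0)

/-- A nonholonomic geodesic segment, parametrized on the closed interval `[c,d]`. -/
def IsGeodesicSegment (D : HorDistrib m k) (δ : ℝ → EuclideanSpace ℝ (Fin m)) (c d : ℝ) :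
    Prop :=
  c ≤ d ∧ (∀ s ∈ Icc c d, δ s ∈ D.U) ∧ ContDiffOn ℝ (⊤ : ℕ∞) δ (Icc c d) ∧
  (c < d →
    (∀ s ∈ Icc c d, D.P (δ s) (derivWithin δ (Icc c d) s) = derivWithin δ (Icc c d) s) ∧
    (∀ s ∈ Icc c d, D.P (δ s) (derivWithin (derivWithin δ (Icc c d)) (Icc c d) s) = 0))

/-- The length of a smooth segment. -/
noncomputable def segLength (δ : ℝ → EuclideanSpace ℝ (Fin m)) (c d : ℝ) : ℝ :=
  ∫ s in c..d, ‖derivWithin δ (Icc c d) s‖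

/-- A broken geodesic: a concatenation of finitely many nonholonomic geodesic segments,
with break points `t 0 ≤ t 1 ≤ ⋯ ≤ t n`. -/
def IsBrokenGeodesic (D : HorDistrib m k) (γ : ℝ → EuclideanSpace ℝ (Fin m))
    (n : ℕ) (t : Fin (n + 1) → ℝ) : Prop :=
  Monotone t ∧ ∀ i : Fin n, IsGeodesicSegment D γ (t i.castSucc) (t i.succ)

/-- The length of a broken geodesic. -/
noncomputable def brokenLength (γ : ℝ → EuclideanSpace ℝ (Fin m)) (n : ℕ)
    (t : Fin (n + 1) → ℝ) : ℝ :=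
  ∑ i : Fin n, segLength γ (t i.castSucc) (t i.succ)

/-- Two points are joined by a broken geodesic. -/
def JoinedByBrokenGeodesic (D : HorDistrib m k) (p q : EuclideanSpace ℝ (Fin m)) : Prop :=
  ∃ (n : ℕ) (γ : ℝ → EuclideanSpace ℝ (Fin m)) (t : Fin (n + 1) → ℝ),
    IsBrokenGeodesic D γ n t ∧ γ (t 0) = p ∧ γ (t (Fin.last n)) = q

/-- The distance `d_H`: the infimum of the lengths of broken geodesics joining `p` to `q`. -/
noncomputable def dH (D : HorDistrib m k) (p q : EuclideanSpace ℝ (Fin m)) : ℝ≥0∞ :=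
  sInf {L | ∃ (n : ℕ) (γ : ℝ → EuclideanSpace ℝ (Fin m)) (t : Fin (n + 1) → ℝ),
    IsBrokenGeodesic D γ n t ∧ γ (t 0) = p ∧ γ (t (Fin.last n)) = q ∧
    L = ENNReal.ofReal (brokenLength γ n t)}

/-- `γ` is an absolutely continuous horizontal curve on `[c,d]` with a.e. derivative `g`. -/
def IsHorizontalAC (D : HorDistrib m k) (γ g : ℝ → EuclideanSpace ℝ (Fin m)) (c d : ℝ) :
    Prop :=
  c ≤ d ∧ IntegrableOn g (Icc c d) ∧
  (∀ s ∈ Icc c d, γ s = γ c + ∫ r in c..s, g r) ∧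
  (∀ s ∈ Icc c d, γ s ∈ D.U) ∧
  (∀ᵐ s ∂(volume.restrict (Icc c d)), D.P (γ s) (g s) = g s)

/-- The Carnot–Carathéodory distance: the infimum of the lengths of absolutely continuous
horizontal curves joining `p` to `q`. -/
noncomputable def dc (D : HorDistrib m k) (p q : EuclideanSpace ℝ (Fin m)) : ℝ≥0∞ :=
  sInf {L | ∃ (γ g : ℝ → EuclideanSpace ℝ (Fin m)) (c d : ℝ),
    IsHorizontalAC D γ g c d ∧ γ c = p ∧ γ d = q ∧
    L = ENNReal.ofReal (∫ s in c..d, ‖g s‖)}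

/-- A (smooth) section of the distribution `Σ`. -/
def IsSection (D : HorDistrib m k) (V : EuclideanSpace ℝ (Fin m) → EuclideanSpace ℝ (Fin m)) :
    Prop :=
  ContDiffOn ℝ (⊤ : ℕ∞) V D.U ∧ ∀ p ∈ D.U, D.P p (V p) = V p

/-- The Lie bracket of two vector fields on `ℝ^m`. -/
noncomputable def lieBracket (X Y : EuclideanSpace ℝ (Fin m) → EuclideanSpace ℝ (Fin m)) :
    EuclideanSpace ℝ (Fin m) → EuclideanSpace ℝ (Fin m) :=
  fun p => fderiv ℝ Y p (X p) - fderiv ℝ X p (Y p)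

/-- `IsIterBracket D j V` :  `V` is an iterated Lie bracket of exactly `j` sections of `Σ`. -/
inductive IsIterBracket (D : HorDistrib m k) :
    ℕ → (EuclideanSpace ℝ (Fin m) → EuclideanSpace ℝ (Fin m)) → Prop
  | base : ∀ V, IsSection D V → IsIterBracket D 1 V
  | bracket : ∀ (a b : ℕ) (X Y), IsIterBracket D a X → IsIterBracket D b Y →
      IsIterBracket D (a + b) (lieBracket X Y)

/-- `Σ_i(p)`: the span of the evaluations at `p` of all iterated Lie brackets of at most `i`
sections of `Σ`. -/
noncomputable def sigmaFlag (D : HorDistrib m k) (i : ℕ) (p : EuclideanSpace ℝ (Fin m)) :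
    Submodule ℝ (EuclideanSpace ℝ (Fin m)) :=
  Submodule.span ℝ {v | ∃ j ≤ i, ∃ V, IsIterBracket D j V ∧ v = V p}

/-- `Σ` is bracket generating. -/
def BracketGenerating (D : HorDistrib m k) : Prop :=
  ∀ p ∈ D.U, ∃ l, sigmaFlag D l p = ⊤

/-- `Σ` is regular at `p`, with degree `l` (the least `l` with `Σ_l(p) = ℝ^m`) :  the
dimensions of the flag `Σ_i`, `i ≤ l`, are constant near `p`. -/
def RegularAt (D : HorDistrib m k) (p : EuclideanSpace ℝ (Fin m)) (l : ℕ) : Prop :=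
  sigmaFlag D l p = ⊤ ∧ (∀ i < l, sigmaFlag D i p ≠ ⊤) ∧
  ∃ W, IsOpen W ∧ p ∈ W ∧ W ⊆ D.U ∧
    ∀ i ≤ l, ∀ q ∈ W,
      Module.finrank ℝ (sigmaFlag D i q) = Module.finrank ℝ (sigmaFlag D i p)

/-- `f` is nonholonomically geodesically convex on `Ω`: its restriction to any nonholonomic
geodesic contained in `Ω` is convex. -/
def NConvexOn (D : HorDistrib m k) (Ω : Set (EuclideanSpace ℝ (Fin m)))
    (f : EuclideanSpace ℝ (Fin m) → ℝ) : Prop :=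
  ∀ (γ : ℝ → EuclideanSpace ℝ (Fin m)) (a b : ℝ), IsNhGeodesicOn D γ (Ioo a b) →
    (∀ s ∈ Ioo a b, γ s ∈ Ω) → ConvexOn ℝ (Ioo a b) (f ∘ γ)

/-- `Ω` is a nonholonomically geodesically convex set. -/
def NConvexSet (D : HorDistrib m k) (Ω : Set (EuclideanSpace ℝ (Fin m))) : Prop :=
  ∀ (γ : ℝ → EuclideanSpace ℝ (Fin m)) (a b : ℝ), IsNhGeodesicOn D γ (Ioo a b) →
    ∀ s₁ ∈ Ioo a b, ∀ s₂ ∈ Ioo a b, γ s₁ ∈ Ω → γ s₂ ∈ Ω → ∀ s ∈ Icc s₁ s₂, γ s ∈ Ω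

open scoped ContDiff in
private lemma aux_bootstrap {E : Type*} [NormedAddCommGroup E] [NormedSpace ℝ E]
    {G : E → E} {Ω : Set E} (hG : ContDiffOn ℝ (⊤ : ℕ∞) G Ω)
    {z : ℝ → E} {I : Set ℝ} (hI : IsOpen I)
    (hz : ∀ s ∈ I, HasDerivAt z (G (z s)) s) (hmem : ∀ s ∈ I, z s ∈ Ω) :
    ContDiffOn ℝ (⊤ : ℕ∞) z I := by
  suffices H : ∀ n : ℕ, ContDiffOn ℝ n z I by
    rw [contDiffOn_infty]
    exact H
  intro n
  induction n with
  | zero =>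
    exact contDiffOn_zero.mpr fun s hs =>
      ((hz s hs).differentiableAt.continuousAt).continuousWithinAt
  | succ n ih =>
    rw [show ((n + 1 : ℕ) : WithTop ℕ∞) = (n : WithTop ℕ∞) + 1 by push_cast; ring,
      contDiffOn_succ_iff_deriv_of_isOpen hI]
    refine ⟨fun s hs => (hz s hs).differentiableAt.differentiableWithinAt,
      by simp, ?_⟩
    have h1 : ContDiffOn ℝ n (G ∘ z) I := (hG.of_le (by exact_mod_cast le_top)).comp ih hmem
    exact h1.congr fun s hs => (hz s hs).deriv

/-- Smoothness of the horizontal gradient field `V q = P q (∇ f q)` on `U`. -/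
private lemma aux_smoothV (D : HorDistrib m k) {f : EuclideanSpace ℝ (Fin m) → ℝ}
    (hf : ContDiffOn ℝ (⊤ : ℕ∞) f D.U) :
    ContDiffOn ℝ (⊤ : ℕ∞) (fun q => D.P q (gradient f q)) D.U := by
  refine D.smooth_P.clm_apply ?_
  have h1 : ContDiffOn ℝ (⊤ : ℕ∞) (fderiv ℝ f) D.U :=
    hf.fderiv_of_isOpen D.isOpen_U (by simp)
  have h2 := ((InnerProductSpace.toDual ℝ
    (EuclideanSpace ℝ (Fin m))).symm.toContinuousLinearEquiv :
    (EuclideanSpace ℝ (Fin m) →L[ℝ] ℝ) ≃L[ℝ] EuclideanSpace ℝ (Fin m)).contDiff.comp_contDiffOn h1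
  exact h2

/-- `⟪∇ f q, w⟫ = fderiv f q w`. -/
private lemma aux_grad (f : EuclideanSpace ℝ (Fin m) → ℝ) (q w : EuclideanSpace ℝ (Fin m)) :
    ⟪gradient f q, w⟫ = fderiv ℝ f q w := by
  rw [gradient, ← InnerProductSpace.toDual_apply_apply, LinearIsometryEquiv.apply_symm_apply]

/-- First and second derivative of `f ∘ γ` along a nonholonomic geodesic. -/
private lemma aux_deriv (D : HorDistrib m k) {f : EuclideanSpace ℝ (Fin m) → ℝ}
    (hf : ContDiffOn ℝ (⊤ : ℕ∞) f D.U)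
    {γ : ℝ → EuclideanSpace ℝ (Fin m)} {I : Set ℝ} (hI : IsOpen I)
    (hmem : ∀ s ∈ I, γ s ∈ D.U) (hγ : ContDiffOn ℝ (⊤ : ℕ∞) γ I)
    (hhor : ∀ s ∈ I, D.P (γ s) (deriv γ s) = deriv γ s)
    (hgeo : ∀ s ∈ I, D.P (γ s) (deriv (deriv γ) s) = 0) :
    ∀ s ∈ I,
      HasDerivAt (f ∘ γ) (⟪D.P (γ s) (gradient f (γ s)), deriv γ s⟫) s ∧
      HasDerivAt (fun t => ⟪D.P (γ t) (gradient f (γ t)), deriv γ t⟫)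
        (⟪fderiv ℝ (fun q => D.P q (gradient f q)) (γ s) (deriv γ s), deriv γ s⟫) s := by
  have hV := aux_smoothV D hf
  intro s hs
  have hsI : I ∈ nhds s := hI.mem_nhds hs
  have hsU : D.U ∈ nhds (γ s) := D.isOpen_U.mem_nhds (hmem s hs)
  have hdγ : HasDerivAt γ (deriv γ s) s :=
    ((hγ.differentiableOn (by simp)).differentiableAt hsI).hasDerivAt
  have hγ' : ContDiffOn ℝ (⊤ : ℕ∞) (deriv γ) I := by
    have := (contDiffOn_infty_iff_deriv_of_isOpen hI).1 (by exact_mod_cast hγ)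
    exact_mod_cast this.2
  have hdγ' : HasDerivAt (deriv γ) (deriv (deriv γ) s) s :=
    ((hγ'.differentiableOn (by simp)).differentiableAt hsI).hasDerivAt
  have hfd : HasFDerivAt f (fderiv ℝ f (γ s)) (γ s) :=
    ((hf.differentiableOn (by simp)).differentiableAt hsU).hasFDerivAt
  have hVd : HasFDerivAt (fun q => D.P q (gradient f q))
      (fderiv ℝ (fun q => D.P q (gradient f q)) (γ s)) (γ s) :=
    ((hV.differentiableOn (by simp)).differentiableAt hsU).hasFDerivAt
  constructor
  · have h1 : HasDerivAt (f ∘ γ) (fderiv ℝ f (γ s) (deriv γ s)) s :=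
      hfd.comp_hasDerivAt s hdγ
    have h2 : ⟪D.P (γ s) (gradient f (γ s)), deriv γ s⟫ = fderiv ℝ f (γ s) (deriv γ s) := by
      rw [D.selfAdjoint _ (hmem s hs), hhor s hs, aux_grad]
    rwa [h2]
  · have hVγ : HasDerivAt (fun t => D.P (γ t) (gradient f (γ t)))
        (fderiv ℝ (fun q => D.P q (gradient f q)) (γ s) (deriv γ s)) s :=
      hVd.comp_hasDerivAt s hdγ
    have h3 := hVγ.inner (𝕜 := ℝ) hdγ'
    have h4 : ⟪D.P (γ s) (gradient f (γ s)), deriv (deriv γ) s⟫ = 0 := by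
      rw [D.selfAdjoint _ (hmem s hs), hgeo s hs, inner_zero_right]
    rw [h4, zero_add] at h3
    exact h3

private lemma aux_bwd (D : HorDistrib m k) {f : EuclideanSpace ℝ (Fin m) → ℝ}
    (hf : ContDiffOn ℝ (⊤ : ℕ∞) f D.U)
    (hH : ∀ p ∈ D.U, ∀ v : EuclideanSpace ℝ (Fin m), D.P p v = v →
      0 ≤ ⟪fderiv ℝ (fun q => D.P q (gradient f q)) p v, v⟫) :
    NConvexOn D D.U f := by
  intro γ a b hgeo _
  obtain ⟨hI, hmem, hγ, hhor, hgeo2⟩ := hgeo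
  have key := aux_deriv D hf isOpen_Ioo hmem hγ hhor hgeo2
  refine convexOn_of_deriv2_nonneg (convex_Ioo a b) ?_ ?_ ?_ ?_
  · exact fun s hs => ((key s hs).1.differentiableAt.continuousAt).continuousWithinAt
  · rw [interior_Ioo]
    exact fun s hs => (key s hs).1.differentiableAt.differentiableWithinAt
  · rw [interior_Ioo]
    intro s hs
    have heq : deriv (f ∘ γ) =ᶠ[nhds s]
        fun t => ⟪D.P (γ t) (gradient f (γ t)), deriv γ t⟫ :=
      Filter.eventually_of_mem (isOpen_Ioo.mem_nhds hs) (fun t ht => (key t ht).1.deriv)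
    exact ((key s hs).2.differentiableAt.congr_of_eventuallyEq heq).differentiableWithinAt
  · rw [interior_Ioo]
    intro s hs
    show 0 ≤ deriv (deriv (f ∘ γ)) s
    have heq : deriv (f ∘ γ) =ᶠ[nhds s]
        fun t => ⟪D.P (γ t) (gradient f (γ t)), deriv γ t⟫ :=
      Filter.eventually_of_mem (isOpen_Ioo.mem_nhds hs) (fun t ht => (key t ht).1.deriv)
    rw [heq.deriv_eq, (key s hs).2.deriv]
    exact hH (γ s) (hmem s hs) (deriv γ s) (hhor s hs)


local notation "𝔼" => EuclideanSpace ℝ (Fin m)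

private lemma aux_fwd (D : HorDistrib m k) {f : EuclideanSpace ℝ (Fin m) → ℝ}
    (hf : ContDiffOn ℝ (⊤ : ℕ∞) f D.U) (hc : NConvexOn D D.U f) :
    ∀ p ∈ D.U, ∀ v : EuclideanSpace ℝ (Fin m), D.P p v = v →
      0 ≤ ⟪fderiv ℝ (fun q => D.P q (gradient f q)) p v, v⟫ := by
  classical
  intro p hp v hv
  set G : 𝔼 × 𝔼 → 𝔼 × 𝔼 :=
    fun z => (D.P z.1 z.2, -((fderiv ℝ D.P z.1) (D.P z.1 z.2)) z.2) with hGdef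
  have hΩ : IsOpen ((D.U ×ˢ (univ : Set 𝔼)) : Set (𝔼 × 𝔼)) := D.isOpen_U.prod isOpen_univ
  have hP1 : ContDiffOn ℝ (⊤ : ℕ∞) (fun z : 𝔼 × 𝔼 => D.P z.1) (D.U ×ˢ univ) :=
    D.smooth_P.comp contDiff_fst.contDiffOn (fun z hz => hz.1)
  have hP2 : ContDiffOn ℝ (⊤ : ℕ∞) (fun z : 𝔼 × 𝔼 => D.P z.1 z.2) (D.U ×ˢ univ) :=
    hP1.clm_apply contDiff_snd.contDiffOn
  have hDP : ContDiffOn ℝ (⊤ : ℕ∞) (fderiv ℝ D.P) D.U :=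
    D.smooth_P.fderiv_of_isOpen D.isOpen_U (by simp)
  have hDP1 : ContDiffOn ℝ (⊤ : ℕ∞) (fun z : 𝔼 × 𝔼 => fderiv ℝ D.P z.1) (D.U ×ˢ univ) :=
    hDP.comp contDiff_fst.contDiffOn (fun z hz => hz.1)
  have hGsm : ContDiffOn ℝ (⊤ : ℕ∞) G (D.U ×ˢ univ) :=
    hP2.prodMk (((hDP1.clm_apply hP2).clm_apply contDiff_snd.contDiffOn).neg)
  have hpv : ((p, v) : 𝔼 × 𝔼) ∈ D.U ×ˢ (univ : Set 𝔼) := ⟨hp, mem_univ _⟩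
  have hGat : ContDiffAt ℝ 1 G ((p, v) : 𝔼 × 𝔼) :=
    (hGsm.contDiffAt (hΩ.mem_nhds hpv)).of_le (by exact_mod_cast le_top)
  obtain ⟨z, hz0, ε, hε, hzd⟩ := hGat.exists_forall_mem_closedBall_exists_eq_forall_mem_Ioo_hasDerivAt₀ (0 : ℝ)
  rw [zero_sub, zero_add] at hzd
  have hcont : ContinuousAt z 0 :=
    (hzd 0 ⟨by linarith, hε⟩).differentiableAt.continuousAt
  have hnb : z ⁻¹' (D.U ×ˢ univ) ∩ Ioo (-ε) ε ∈ nhds (0 : ℝ) := by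
    refine Filter.inter_mem ?_ (Ioo_mem_nhds (by linarith) hε)
    exact hcont.preimage_mem_nhds (hΩ.mem_nhds (by rw [hz0]; exact hpv))
  obtain ⟨δ, hδ, hball⟩ := Metric.mem_nhds_iff.mp hnb
  rw [Real.ball_eq_Ioo, zero_sub, zero_add] at hball
  have hIsub : Ioo (-δ) δ ⊆ Ioo (-ε) ε := fun t ht => (hball ht).2
  have hImem : ∀ s ∈ Ioo (-δ) δ, z s ∈ D.U ×ˢ (univ : Set 𝔼) := fun s hsm => (hball hsm).1
  have hzd' : ∀ s ∈ Ioo (-δ) δ, HasDerivAt z (G (z s)) s := fun s hsm => hzd s (hIsub hsm)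
  set γ : ℝ → 𝔼 := fun s => (z s).1 with hγdef
  set h : ℝ → 𝔼 := fun s => (z s).2 with hhdef
  have hmem : ∀ s ∈ Ioo (-δ) δ, γ s ∈ D.U := fun s hsm => (hImem s hsm).1
  have hzsm : ContDiffOn ℝ (⊤ : ℕ∞) z (Ioo (-δ) δ) :=
    aux_bootstrap hGsm isOpen_Ioo hzd' hImem
  have hγsm : ContDiffOn ℝ (⊤ : ℕ∞) γ (Ioo (-δ) δ) := contDiff_fst.comp_contDiffOn hzsm
  have hγd : ∀ s ∈ Ioo (-δ) δ, HasDerivAt γ (D.P (γ s) (h s)) s := fun s hsm =>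
    (ContinuousLinearMap.fst ℝ 𝔼 𝔼).hasFDerivAt.comp_hasDerivAt s (hzd' s hsm)
  have hhd : ∀ s ∈ Ioo (-δ) δ,
      HasDerivAt h (-((fderiv ℝ D.P (γ s)) (D.P (γ s) (h s))) (h s)) s := fun s hsm =>
    (ContinuousLinearMap.snd ℝ 𝔼 𝔼).hasFDerivAt.comp_hasDerivAt s (hzd' s hsm)
  have hderiv : ∀ s ∈ Ioo (-δ) δ, deriv γ s = D.P (γ s) (h s) := fun s hsm => (hγd s hsm).deriv
  have hhor : ∀ s ∈ Ioo (-δ) δ, D.P (γ s) (deriv γ s) = deriv γ s := by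
    intro s hsm
    rw [hderiv s hsm, D.idem _ (hmem s hsm)]
  have hsecond : ∀ s ∈ Ioo (-δ) δ, deriv (deriv γ) s =
      ((fderiv ℝ D.P (γ s)) (D.P (γ s) (h s))) (h s)
        + D.P (γ s) (-((fderiv ℝ D.P (γ s)) (D.P (γ s) (h s))) (h s)) := by
    intro s hsm
    have heq : deriv γ =ᶠ[nhds s] fun t => D.P (γ t) (h t) :=
      Filter.eventually_of_mem (isOpen_Ioo.mem_nhds hsm) (fun t ht => (hγd t ht).deriv)
    rw [heq.deriv_eq]
    have hPdiff : HasFDerivAt D.P (fderiv ℝ D.P (γ s)) (γ s) :=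
      ((D.smooth_P.differentiableOn (by simp)).differentiableAt
        (D.isOpen_U.mem_nhds (hmem s hsm))).hasFDerivAt
    have hPγ : HasDerivAt (fun t => D.P (γ t))
        ((fderiv ℝ D.P (γ s)) (D.P (γ s) (h s))) s :=
      hPdiff.comp_hasDerivAt s (hγd s hsm)
    exact (hPγ.clm_apply (hhd s hsm)).deriv
  have hgeo : ∀ s ∈ Ioo (-δ) δ, D.P (γ s) (deriv (deriv γ) s) = 0 := by
    intro s hsm
    rw [hsecond s hsm, map_add, D.idem _ (hmem s hsm), map_neg, add_neg_cancel]
  have hgeoOn : IsNhGeodesicOn D γ (Ioo (-δ) δ) := ⟨isOpen_Ioo, hmem, hγsm, hhor, hgeo⟩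
  have hconv := hc γ (-δ) δ hgeoOn hmem
  have key := aux_deriv D hf isOpen_Ioo hmem hγsm hhor hgeo
  have h0I : (0 : ℝ) ∈ Ioo (-δ) δ := ⟨by linarith, hδ⟩
  have hγ0 : γ 0 = p := by show (z 0).1 = p; rw [hz0]
  have hh0 : h 0 = v := by show (z 0).2 = v; rw [hz0]
  have hder0 : deriv γ 0 = v := by rw [hderiv 0 h0I, hγ0, hh0, hv]
  have hdiff : ∀ x ∈ Ioo (-δ) δ, DifferentiableAt ℝ (f ∘ γ) x := fun x hx =>
    (key x hx).1.differentiableAt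
  have hmono : MonotoneOn (deriv (f ∘ γ)) (Ioo (-δ) δ) := hconv.monotoneOn_deriv hdiff
  set g : ℝ → ℝ := fun t => ⟪D.P (γ t) (gradient f (γ t)), deriv γ t⟫ with hgdef
  have hmono' : MonotoneOn g (Ioo (-δ) δ) := by
    intro x hx y hy hxy
    have ex : deriv (f ∘ γ) x = g x := (key x hx).1.deriv
    have ey : deriv (f ∘ γ) y = g y := (key y hy).1.deriv
    rw [← ex, ← ey]
    exact hmono hx hy hxy
  have hgd : HasDerivAt g
      (⟪fderiv ℝ (fun q => D.P q (gradient f q)) (γ 0) (deriv γ 0), deriv γ 0⟫) 0 :=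
    (key 0 h0I).2
  have hlim := hasDerivAt_iff_tendsto_slope.mp hgd
  have hge : 0 ≤ ⟪fderiv ℝ (fun q => D.P q (gradient f q)) (γ 0) (deriv γ 0), deriv γ 0⟫ := by
    have hsub : Set.Ioi (0 : ℝ) ⊆ ({(0 : ℝ)}ᶜ : Set ℝ) := fun t ht => ne_of_gt ht
    refine ge_of_tendsto (hlim.mono_left (nhdsWithin_mono (0 : ℝ) hsub)) ?_
    · refine Filter.eventually_of_mem (Ioo_mem_nhdsGT_of_mem ⟨le_refl (0 : ℝ), hδ⟩) ?_
      intro t ht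
      have htI : t ∈ Ioo (-δ) δ := ⟨by linarith [ht.1], ht.2⟩
      have hle : g 0 ≤ g t := hmono' h0I htI (le_of_lt ht.1)
      have : slope g 0 t = (g t - g 0) / (t - 0) := slope_def_field g 0 t
      rw [this, sub_zero]
      exact div_nonneg (by linarith) (le_of_lt ht.1)
  rwa [hγ0, hder0] at hge

/-- A smooth function on `U` is n-convex iff its horizontal Hessian is
positive semidefinite: `⟪D(P ∇f)(p)[v], v⟫ ≥ 0` for all `p ∈ U` and `v ∈ Σ_p`. -/
theorem nconvex_iff_horizontal_hessian_nonneg {m k : ℕ} (D : HorDistrib m k)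
    (f : EuclideanSpace ℝ (Fin m) → ℝ) (hf : ContDiffOn ℝ (⊤ : ℕ∞) f D.U) :
    NConvexOn D D.U f ↔
      ∀ p ∈ D.U, ∀ v : EuclideanSpace ℝ (Fin m), D.P p v = v →
        0 ≤ ⟪fderiv ℝ (fun q => D.P q (gradient f q)) p v, v⟫ := by
  exact ⟨aux_fwd D hf, aux_bwd D hf⟩
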